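/- Let A and B be nilpotent groups of class at most two, and let D be a common subgroup of A and B (given by injective homomorphisms ι : D → A and κ : D → B) with D co-central in B. Suppose condition (**) holds: for every integer q > 0, every a ∈ A with a^q in the subgroup generated by [A,A] and ι(D), and every z ∈ Z(B) and d ∈ D with κ(d) = z^q, one has ⁅a, ι(d)⁆ = 1 in A. Then for every integer q > 0, every a ∈ A and a' ∈ [A,A] with a^q·a' ∈ ι(D), and every b ∈ B and b' ∈ [B,B] with b^q·b' ∈ κ(D), say a^q·a' = ι(d₁) and b^q·b' = κ(d₂) with d₁, d₂ ∈ D, there exists d ∈ D such that ⁅a, ι(d₂)⁆ = ι(d) in A and ⁅κ(d₁), b⁆ = κ(d) in B. -/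

import Mathlib

open scoped commutatorElement

private lemma comm_right_central {G : Type*} [Group G] {z : G}
    (hz : ∀ g : G, g * z = z * g) (x y : G) : ⁅x, y * z⁆ = ⁅x, y⁆ := by
  have hc : ∀ g : G, Commute g z := fun g => hz g
  calc ⁅x, y * z⁆ = x * y * (z * x⁻¹) * (z⁻¹ * y⁻¹) := by
        rw [commutatorElement_def, mul_inv_rev]; group
    _ = x * y * (x⁻¹ * z) * (z⁻¹ * y⁻¹) := by rw [← (hc x⁻¹).eq]
    _ = ⁅x, y⁆ := by rw [commutatorElement_def]; group

private lemma comm_left_central {G : Type*} [Group G] {z : G}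
    (hz : ∀ g : G, g * z = z * g) (x y : G) : ⁅x * z, y⁆ = ⁅x, y⁆ := by
  rw [← commutatorElement_inv, comm_right_central hz, commutatorElement_inv]

private lemma comm_mul_right {G : Type*} [Group G]
    (hG : ∀ g h : G, ∀ k : G, ⁅g, h⁆ * k = k * ⁅g, h⁆) (x u v : G) :
    ⁅x, u * v⁆ = ⁅x, u⁆ * ⁅x, v⁆ := by
  have h1 : ⁅x, u * v⁆ = ⁅x, u⁆ * (u * ⁅x, v⁆ * u⁻¹) := by
    simp only [commutatorElement_def, mul_inv_rev]; group
  rw [h1, ← hG x v u, mul_inv_cancel_right]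

private lemma comm_zpow_right {G : Type*} [Group G]
    (hG : ∀ g h : G, ∀ k : G, ⁅g, h⁆ * k = k * ⁅g, h⁆) (x y : G) (n : ℤ) :
    ⁅x, y ^ n⁆ = ⁅x, y⁆ ^ n := by
  have hnat : ∀ m : ℕ, ⁅x, y ^ m⁆ = ⁅x, y⁆ ^ m := by
    intro m
    induction m with
    | zero => simp
    | succ k ih => rw [pow_succ, comm_mul_right hG, ih, pow_succ]
  induction n using Int.rec with
  | ofNat m => simpa using hnat m
  | negSucc m =>
      have h := comm_mul_right hG x (y ^ (m + 1)) (y ^ (m + 1))⁻¹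
      rw [mul_inv_cancel, commutatorElement_one_right, hnat (m + 1)] at h
      rw [zpow_negSucc, zpow_negSucc]
      exact (inv_eq_of_mul_eq_one_right h.symm).symm

private lemma comm_zpow_left {G : Type*} [Group G]
    (hG : ∀ g h : G, ∀ k : G, ⁅g, h⁆ * k = k * ⁅g, h⁆) (x y : G) (n : ℤ) :
    ⁅x ^ n, y⁆ = ⁅x, y⁆ ^ n := by
  rw [← commutatorElement_inv, comm_zpow_right hG, ← commutatorElement_inv, inv_zpow, inv_inv]

/-- If `D` is co-central in `B` and condition (**) holds, then condition (b) of
Maier's Korollar 3 holds. -/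
theorem cocentral_condition_b {A B D : Type*} [Group A] [Group B] [Group D]
    (hA : commutator A ≤ Subgroup.center A)
    (hB : commutator B ≤ Subgroup.center B)
    (ι : D →* A) (κ : D →* B)
    (hι : Function.Injective ι) (hκ : Function.Injective κ)
    (hcocentral : κ.range ⊔ Subgroup.center B = ⊤)
    (hstar : ∀ q : ℤ, 0 < q → ∀ a : A, a ^ q ∈ commutator A ⊔ ι.range →
      ∀ z : B, z ∈ Subgroup.center B → ∀ d : D, κ d = z ^ q → ⁅a, ι d⁆ = 1) :
    ∀ q : ℤ, 0 < q → ∀ a : A, ∀ a' ∈ commutator A, ∀ b : B, ∀ b' ∈ commutator B,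
      ∀ d₁ d₂ : D, a ^ q * a' = ι d₁ → b ^ q * b' = κ d₂ →
        ∃ d : D, ⁅a, ι d₂⁆ = ι d ∧ ⁅κ d₁, b⁆ = κ d := by
  intro q hq a a' ha' b b' hb' d₁ d₂ h₁ h₂
  -- commutators are central in A and in B
  have hAc : ∀ g h : A, ∀ k : A, ⁅g, h⁆ * k = k * ⁅g, h⁆ := fun g h k =>
    ((Subgroup.mem_center_iff.mp
      (hA (Subgroup.commutator_mem_commutator (Subgroup.mem_top g) (Subgroup.mem_top h)))) k).symm
  have hBcen : ∀ g h : B, ⁅g, h⁆ ∈ Subgroup.center B := fun g h =>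
    hB (Subgroup.commutator_mem_commutator (Subgroup.mem_top g) (Subgroup.mem_top h))
  have ha'' : ∀ w : A, w * a' = a' * w := fun w => Subgroup.mem_center_iff.mp (hA ha') w
  -- decompose elements of B as κ e * z with z central
  have hdec : ∀ x : B, ∃ e : D, ∃ z ∈ Subgroup.center B, x = κ e * z := by
    intro x
    have hx : x ∈ κ.range ⊔ Subgroup.center B := hcocentral ▸ Subgroup.mem_top x
    rw [← SetLike.mem_coe, Subgroup.mul_normal] at hx
    obtain ⟨u, hu, z, hz, hxz⟩ := hx
    obtain ⟨e, rfl⟩ := hu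
    exact ⟨e, z, hz, hxz.symm⟩
  -- the commutator subgroup of B is the image of a nice subgroup of D
  have hBP : commutator B ≤ Subgroup.map κ
      (((Subgroup.center A).comap ι) ⊓ ((Subgroup.center B).comap κ)) := by
    rw [commutator_def, Subgroup.commutator_le]
    intro g₁ _ g₂ _
    obtain ⟨e₁, z₁, hz₁, rfl⟩ := hdec g₁
    obtain ⟨e₂, z₂, hz₂, rfl⟩ := hdec g₂
    have hz₁' : ∀ g : B, g * z₁ = z₁ * g := fun g => Subgroup.mem_center_iff.mp hz₁ g
    have hz₂' : ∀ g : B, g * z₂ = z₂ * g := fun g => Subgroup.mem_center_iff.mp hz₂ g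
    rw [comm_right_central hz₂', comm_left_central hz₁', ← map_commutatorElement]
    refine ⟨⁅e₁, e₂⁆, Subgroup.mem_inf.mpr ⟨?_, ?_⟩, rfl⟩
    · rw [Subgroup.mem_comap, map_commutatorElement]
      exact hA (Subgroup.commutator_mem_commutator (Subgroup.mem_top _) (Subgroup.mem_top _))
    · rw [Subgroup.mem_comap, map_commutatorElement]
      exact hBcen _ _
  obtain ⟨g, hgmem, hgb'⟩ := hBP hb'
  obtain ⟨hgA, hgB⟩ := Subgroup.mem_inf.mp hgmem
  rw [Subgroup.mem_comap] at hgA hgB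
  have hgA' : ∀ w : A, w * ι g = ι g * w := fun w => Subgroup.mem_center_iff.mp hgA w
  have hgB' : ∀ w : B, w * κ g = κ g * w := fun w => Subgroup.mem_center_iff.mp hgB w
  obtain ⟨e, z, hz, hbz⟩ := hdec b
  have hz' : ∀ w : B, w * z = z * w := fun w => Subgroup.mem_center_iff.mp hz w
  -- the auxiliary element d'
  set d' : D := (e ^ q * g)⁻¹ * d₂ with hd'
  have hκd' : κ d' = z ^ q := by
    have hcom : Commute (κ e) z := hz' (κ e)
    have hstep : κ d' = (κ g)⁻¹ * ((κ e ^ q)⁻¹ * (κ e ^ q * z ^ q * κ g)) := by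
      rw [hd', map_mul, map_inv, map_mul, map_zpow, mul_inv_rev, ← h₂, hbz, hcom.mul_zpow, ← hgb']
      group
    rw [hstep, mul_assoc (κ e ^ q), inv_mul_cancel_left, hgB', inv_mul_cancel_left]
  -- condition (**) applies
  have haq : a ^ q ∈ commutator A ⊔ ι.range := by
    have hq' : a ^ q = ι d₁ * a'⁻¹ := by rw [← h₁]; group
    rw [hq']
    exact mul_mem (Subgroup.mem_sup_right ⟨d₁, rfl⟩) (Subgroup.mem_sup_left (inv_mem ha'))
  have hd'1 : ⁅a, ι d'⁆ = 1 := hstar q hq a haq z hz d' hκd'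
  have hd₂eq : d₂ = e ^ q * g * d' := by rw [hd']; group
  refine ⟨⁅d₁, e⁆, ?_, ?_⟩
  · have h3 : ⁅a, ι d₂⁆ = ⁅a, ι e⁆ ^ q := by
      rw [hd₂eq, map_mul, map_mul, map_zpow, comm_mul_right hAc, comm_mul_right hAc, hd'1,
        comm_zpow_right hAc, mul_one]
      have hg1 : ⁅a, ι g⁆ = 1 := commutatorElement_eq_one_iff_commute.mpr (hgA' a)
      rw [hg1, mul_one]
    rw [h3, map_commutatorElement, ← h₁, comm_left_central ha'', comm_zpow_left hAc]
  · rw [map_commutatorElement, hbz, comm_right_central hz']
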